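/- Let x, r, a be real numbers with 0 < x < 1, r > 1, a > 0, and let i ≤ j be positive integers. Then there exists ρ > 0 such that for every complex number z with |z| < ρ, all the series below converge and f_{i,j}(z; a) = ∏_{k=1}^{i} f_{1,j}(x^{−i−1+2k} z; a). (This is relation (4.4) of Lemma 4.5, the fusion product formula for the structure functions of the deformed W-superalgebra W_{q,t}(A(M,N)); note f_{i,j} = f_{j,i} by definition.) -/

import Mathlib

/-- The q-integer `[n]_x = (x^n - x^{-n})/(x - x^{-1})`, with real powers of `x`. -/
noncomputable def qint (x n : ℝ) : ℝ := (x ^ n - x ^ (-n)) / (x - x⁻¹)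

/-- The `m`-th coefficient of the exponent series defining the structure function
`f_{i,j}(z;a)` of the deformed W-superalgebra `W_{q,t}(A(M,N))`. -/
noncomputable def fCoeff (x r a : ℝ) (i j : ℤ) (m : ℕ) : ℝ :=
  (1 / (m : ℝ)) *
    (qint x ((r - 1) * m) * qint x (r * m) * qint x ((min i j : ℤ) * m) *
      qint x ((a - (max i j : ℤ)) * m)) /
    (qint x (m : ℝ) * qint x (a * m)) * (x - x⁻¹) ^ 2

/-- The `m`-th term of the exponent series of `f_{i,j}(z;a)` (including the minus sign),
indexed so that `m : ℕ` corresponds to the power `z^(m+1)`. -/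
noncomputable def fTerm (x r a : ℝ) (i j : ℤ) (z : ℂ) (m : ℕ) : ℂ :=
  -((fCoeff x r a i j (m + 1) : ℝ) : ℂ) * z ^ (m + 1)

/-- The structure function
`f_{i,j}(z;a) = exp(-Σ_{m≥1} c_m z^m)` of `W_{q,t}(A(M,N))`. -/
noncomputable def fFun (x r a : ℝ) (i j : ℤ) (z : ℂ) : ℂ :=
  Complex.exp (∑' m : ℕ, fTerm x r a i j z m)

/-- The real power `x^t`, regarded as a complex number. -/
noncomputable def xp (x t : ℝ) : ℂ := ((x ^ t : ℝ) : ℂ)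

lemma sum_Icc_int (n : ℕ) (F : ℤ → ℝ) :
    ∑ k ∈ Finset.Icc (1:ℤ) (n:ℤ), F k = ∑ k ∈ Finset.range n, F (k+1) := by
  induction n with
  | zero => simp
  | succ n ih =>
    rw [Finset.sum_range_succ, ← ih, Nat.cast_succ,
      show Finset.Icc (1:ℤ) ((n:ℤ)+1) = insert ((n:ℤ)+1) (Finset.Icc (1:ℤ) (n:ℤ)) by
        ext k; simp [Finset.mem_Icc]; omega,
      Finset.sum_insert (by simp)]
    ring

lemma qint_mul {x : ℝ} (hx0 : 0 < x) (m : ℝ) {i : ℤ} (hi : 1 ≤ i) :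
    qint x ((i:ℝ) * m) =
      qint x m * ∑ k ∈ Finset.Icc (1:ℤ) i, x ^ ((-(i:ℝ) - 1 + 2*(k:ℝ)) * m) := by
  lift i to ℕ using (by omega) with n
  rw [qint, qint, div_mul_eq_mul_div]
  congr 1
  rw [sum_Icc_int, Finset.mul_sum]
  have tel := Finset.sum_range_sub (fun k : ℕ => x ^ ((2*(k:ℝ) - (n:ℝ)) * m)) n
  push_cast at tel
  calc x ^ (((n:ℤ):ℝ) * m) - x ^ (-(((n:ℤ):ℝ) * m))
      = ∑ k ∈ Finset.range n,
          (x ^ ((2*((k:ℝ)+1) - (n:ℝ)) * m) - x ^ ((2*(k:ℝ) - (n:ℝ)) * m)) := by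
        rw [tel]
        push_cast
        rw [show (2*(n:ℝ) - n) * m = (n:ℝ) * m by ring,
          show (2*(0:ℝ) - n) * m = -((n:ℝ) * m) by ring]
    _ = ∑ k ∈ Finset.range n,
          (x ^ m - x ^ (-m)) * x ^ ((-(((n:ℤ):ℝ)) - 1 + 2*(((k:ℕ)+1:ℤ):ℝ)) * m) := by
        refine Finset.sum_congr rfl fun k _ => ?_
        rw [eq_comm, sub_mul, ← Real.rpow_add hx0, ← Real.rpow_add hx0]
        congr 1 <;> · congr 1; push_cast; ring

lemma fCoeff_fusion {x r a : ℝ} (hx0 : 0 < x) {i j : ℤ} (hi : 1 ≤ i) (hij : i ≤ j) (m : ℕ) :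
    fCoeff x r a i j m =
      ∑ k ∈ Finset.Icc (1:ℤ) i, fCoeff x r a 1 j m * x ^ ((-(i:ℝ) - 1 + 2*(k:ℝ)) * m) := by
  have hj : (1:ℤ) ≤ j := hi.trans hij
  unfold fCoeff
  rw [min_eq_left hij, max_eq_right hij, min_eq_left hj, max_eq_right hj,
    qint_mul hx0 (m:ℝ) hi, ← Finset.mul_sum]
  simp only [Int.cast_one, one_mul]
  ring

lemma fTerm_fusion {x r a : ℝ} (hx0 : 0 < x) {i j : ℤ} (hi : 1 ≤ i) (hij : i ≤ j)
    (z : ℂ) (m : ℕ) :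
    fTerm x r a i j z m =
      ∑ k ∈ Finset.Icc (1:ℤ) i, fTerm x r a 1 j (xp x (-(i:ℝ) - 1 + 2*(k:ℝ)) * z) m := by
  unfold fTerm xp
  rw [fCoeff_fusion hx0 hi hij (m+1), Complex.ofReal_sum, ← Finset.sum_neg_distrib,
    Finset.sum_mul]
  refine Finset.sum_congr rfl fun k _ => ?_
  rw [mul_pow, ← Complex.ofReal_pow, ← Real.rpow_natCast (x ^ (-(i:ℝ) - 1 + 2*(k:ℝ))) (m+1),
    ← Real.rpow_mul hx0.le]
  push_cast
  ring

lemma xinv_sub_pos {x : ℝ} (hx0 : 0 < x) (hx1 : x < 1) : 0 < x⁻¹ - x := by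
  have h : 1 < x⁻¹ := (one_lt_inv₀ hx0).2 hx1
  linarith

lemma qint_abs_le {x : ℝ} (hx0 : 0 < x) (hx1 : x < 1) (n : ℝ) :
    |qint x n| ≤ 2 * x ^ (-|n|) / (x⁻¹ - x) := by
  have hs := xinv_sub_pos hx0 hx1
  have h1 : x ^ n ≤ x ^ (-|n|) :=
    Real.rpow_le_rpow_of_exponent_ge hx0 hx1.le (neg_abs_le n)
  have h2 : x ^ (-n) ≤ x ^ (-|n|) :=
    Real.rpow_le_rpow_of_exponent_ge hx0 hx1.le (neg_le_neg (le_abs_self n))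
  have hp1 : 0 < x ^ n := Real.rpow_pos_of_pos hx0 _
  have hp2 : 0 < x ^ (-n) := Real.rpow_pos_of_pos hx0 _
  rw [qint, abs_div, abs_of_neg (by linarith : x - x⁻¹ < 0), neg_sub]
  gcongr
  calc |x ^ n - x ^ (-n)| ≤ |x ^ n| + |x ^ (-n)| := abs_sub _ _
    _ = x ^ n + x ^ (-n) := by rw [abs_of_pos hp1, abs_of_pos hp2]
    _ ≤ 2 * x ^ (-|n|) := by linarith

lemma qint_ge {x : ℝ} (hx0 : 0 < x) (hx1 : x < 1) {t t₀ : ℝ} (ht₀ : 0 < t₀) (h : t₀ ≤ t) :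
    (1 - x ^ (2*t₀)) / (x⁻¹ - x) * x ^ (-t) ≤ qint x t := by
  have hs := xinv_sub_pos hx0 hx1
  rw [qint, ← neg_sub (x ^ (-t)) (x ^ t), ← neg_sub x⁻¹ x, neg_div_neg_eq,
    div_mul_eq_mul_div]
  gcongr
  have key : x ^ (2*t₀) * x ^ (-t) = x ^ (2*t₀ - t) := by
    rw [← Real.rpow_add hx0]; ring_nf
  have h2 : x ^ t ≤ x ^ (2*t₀ - t) :=
    Real.rpow_le_rpow_of_exponent_ge hx0 hx1.le (by linarith)
  nlinarith [Real.rpow_pos_of_pos hx0 (-t)]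

lemma fCoeff_bound {x r a : ℝ} (hx0 : 0 < x) (hx1 : x < 1) (ha : 0 < a)
    (i j : ℤ) (hij : i ≤ j) :
    ∃ C M : ℝ, 0 < C ∧ 0 < M ∧ ∀ m : ℕ, |fCoeff x r a i j m| ≤ C * M ^ m := by
  have hs := xinv_sub_pos hx0 hx1
  set s : ℝ := x⁻¹ - x with hs_def
  have hDa : 0 < 1 - x ^ (2*a) := by
    have := Real.rpow_lt_one hx0.le hx1 (by linarith : (0:ℝ) < 2*a); linarith
  set β : ℝ := |r - 1| + |r| + |(i:ℝ)| + |a - (j:ℝ)| with hβ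
  refine ⟨16 / (s * x * (1 - x ^ (2*a))), x ^ (-β), by positivity,
    Real.rpow_pos_of_pos hx0 _, fun m => ?_⟩
  rcases Nat.eq_zero_or_pos m with hm | hm
  · subst hm
    simp [fCoeff]
    positivity
  · have hm1 : (1:ℝ) ≤ (m:ℝ) := by exact_mod_cast hm
    have hmpos : (0:ℝ) < m := by linarith
    have habs : ∀ b : ℝ, |qint x (b * m)| ≤ 2 * x ^ (-(|b| * m)) / s := by
      intro b
      have h := qint_abs_le hx0 hx1 (b * (m:ℝ))
      rwa [abs_mul, Nat.abs_cast] at h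
    have hxm : (1:ℝ) ≤ x ^ (-(m:ℝ)) := by
      have h := Real.rpow_le_rpow_of_exponent_ge hx0 hx1.le (by linarith : -(m:ℝ) ≤ 0)
      rwa [Real.rpow_zero] at h
    have hxam : (1:ℝ) ≤ x ^ (-(a*(m:ℝ))) := by
      have h := Real.rpow_le_rpow_of_exponent_ge hx0 hx1.le
        (by nlinarith : -(a*(m:ℝ)) ≤ 0)
      rwa [Real.rpow_zero] at h
    have hqm_lb : x ≤ qint x (m:ℝ) := by
      have h := qint_ge hx0 hx1 (t₀ := 1) one_pos hm1
      have e : (1 - x ^ (2*(1:ℝ))) / s = x := by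
        rw [show (2:ℝ)*1 = ((2:ℕ):ℝ) by norm_num, Real.rpow_natCast, div_eq_iff hs.ne',
          hs_def]
        field_simp
      calc x = x * 1 := (mul_one x).symm
        _ ≤ x * x ^ (-(m:ℝ)) := by nlinarith
        _ = (1 - x ^ (2*(1:ℝ))) / s * x ^ (-(m:ℝ)) := by rw [e]
        _ ≤ qint x (m:ℝ) := h
    have hqam_lb : (1 - x ^ (2*a)) / s ≤ qint x (a*(m:ℝ)) := by
      have h := qint_ge hx0 hx1 (t₀ := a) ha (by nlinarith : a ≤ a * (m:ℝ))
      calc (1 - x ^ (2*a)) / s = (1 - x ^ (2*a)) / s * 1 := (mul_one _).symm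
        _ ≤ (1 - x ^ (2*a)) / s * x ^ (-(a*(m:ℝ))) := by
            have h0 : (0:ℝ) ≤ (1 - x ^ (2*a)) / s := by positivity
            nlinarith
        _ ≤ qint x (a*(m:ℝ)) := h
    have hqm_pos : 0 < qint x (m:ℝ) := lt_of_lt_of_le hx0 hqm_lb
    have hqam_pos : 0 < qint x (a*(m:ℝ)) := lt_of_lt_of_le (by positivity) hqam_lb
    have hm_le : 1/(m:ℝ) ≤ 1 := by
      rw [div_le_one hmpos]; exact hm1
    have prod : x ^ (-(|r-1| * (m:ℝ))) * x ^ (-(|r| * (m:ℝ))) * x ^ (-(|(i:ℝ)| * (m:ℝ)))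
        * x ^ (-(|a - (j:ℝ)| * (m:ℝ))) = x ^ (-β * (m:ℝ)) := by
      rw [← Real.rpow_add hx0, ← Real.rpow_add hx0, ← Real.rpow_add hx0, hβ]
      ring_nf
    calc |fCoeff x r a i j m|
        = (1/(m:ℝ)) * (|qint x ((r-1)*(m:ℝ))| * |qint x (r*(m:ℝ))| * |qint x ((i:ℝ)*(m:ℝ))|
            * |qint x ((a - (j:ℝ))*(m:ℝ))|) / (qint x (m:ℝ) * qint x (a*(m:ℝ))) * s^2 := by
          unfold fCoeff
          rw [min_eq_left hij, max_eq_right hij]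
          simp only [abs_mul, abs_div, abs_one, Nat.abs_cast, sq_abs]
          rw [abs_of_pos hqm_pos, abs_of_pos hqam_pos,
            show (x - x⁻¹)^2 = s^2 by rw [hs_def]; ring, abs_of_nonneg (sq_nonneg s)]
      _ ≤ 1 * ((2 * x ^ (-(|r-1| * (m:ℝ)))/s) * (2 * x ^ (-(|r| * (m:ℝ)))/s)
            * (2 * x ^ (-(|(i:ℝ)| * (m:ℝ)))/s) * (2 * x ^ (-(|a - (j:ℝ)| * (m:ℝ)))/s))
            / (x * ((1 - x ^ (2*a)) / s)) * s^2 := by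
          gcongr <;>
            first
              | exact hm_le
              | exact habs _
              | exact hqm_lb
              | exact hqam_lb
              | positivity
      _ = 16 / (s * x * (1 - x ^ (2*a))) * x ^ (-β * (m:ℝ)) := by
          rw [← prod]
          field_simp
          ring
      _ = 16 / (s * x * (1 - x ^ (2*a))) * (x ^ (-β)) ^ m := by
          rw [← Real.rpow_natCast (x ^ (-β)) m, ← Real.rpow_mul hx0.le]

lemma fTerm_summable {x r a : ℝ} {i j : ℤ} {C M : ℝ} (hM : 0 < M)
    (hb : ∀ m : ℕ, |fCoeff x r a i j m| ≤ C * M ^ m) (z : ℂ)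
    (hz : M * ‖z‖ < 1) : Summable (fTerm x r a i j z) := by
  have h0 : 0 ≤ M * ‖z‖ := by positivity
  apply Summable.of_norm
  refine Summable.of_nonneg_of_le (fun m => norm_nonneg _) (fun m => ?_)
    (((summable_geometric_of_lt_one h0 hz).mul_left (C * (M * ‖z‖))))
  have hn : ‖fTerm x r a i j z m‖ = |fCoeff x r a i j (m+1)| * ‖z‖ ^ (m+1) := by
    rw [fTerm, norm_mul, norm_neg, norm_pow, Complex.norm_real, Real.norm_eq_abs]
  rw [hn]
  calc |fCoeff x r a i j (m+1)| * ‖z‖ ^ (m+1)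
      ≤ C * M ^ (m+1) * ‖z‖ ^ (m+1) := by
        gcongr
        exact hb (m+1)
    _ = C * (M * ‖z‖) * (M * ‖z‖) ^ m := by ring

/-- Relation (4.4) of Lemma 4.5: the fusion product formula
`f_{i,j}(z;a) = ∏_{k=1}^{i} f_{1,j}(x^{-i-1+2k} z; a)`,
valid (with all series convergent) for `z` of sufficiently small modulus. -/
theorem statement0 (x r a : ℝ) (hx0 : 0 < x) (hx1 : x < 1) (hr : 1 < r) (ha : 0 < a)
    (i j : ℤ) (hi : 1 ≤ i) (hij : i ≤ j) :
    ∃ ρ : ℝ, 0 < ρ ∧ ∀ z : ℂ, ‖z‖ < ρ →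
      Summable (fTerm x r a i j z) ∧
      (∀ k ∈ Finset.Icc (1 : ℤ) i,
        Summable (fTerm x r a 1 j (xp x (-(i : ℝ) - 1 + 2 * (k : ℝ)) * z))) ∧
      fFun x r a i j z =
        ∏ k ∈ Finset.Icc (1 : ℤ) i, fFun x r a 1 j (xp x (-(i : ℝ) - 1 + 2 * (k : ℝ)) * z) := by
  obtain ⟨C₁, M₁, hC₁, hM₁, hb₁⟩ := fCoeff_bound (r := r) hx0 hx1 ha i j hij
  obtain ⟨C₂, M₂, hC₂, hM₂, hb₂⟩ := fCoeff_bound (r := r) hx0 hx1 ha 1 j (hi.trans hij)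
  set X : ℝ := x ^ ((1:ℝ) - (i:ℝ)) with hX
  have hXpos : 0 < X := Real.rpow_pos_of_pos hx0 _
  refine ⟨min (1/(2*M₁)) (1/(2*M₂*X)), by positivity, fun z hz => ?_⟩
  have hz1 : M₁ * ‖z‖ < 1 := by
    have h := lt_of_lt_of_le hz (min_le_left _ _)
    rw [lt_div_iff₀ (by positivity)] at h
    nlinarith [norm_nonneg z]
  have hzk : ∀ k ∈ Finset.Icc (1:ℤ) i,
      M₂ * ‖xp x (-(i:ℝ) - 1 + 2*(k:ℝ)) * z‖ < 1 := by
    intro k hk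
    rw [Finset.mem_Icc] at hk
    have hklb : (1:ℝ) ≤ (k:ℝ) := by exact_mod_cast hk.1
    have hxt : x ^ (-(i:ℝ) - 1 + 2*(k:ℝ)) ≤ X := by
      rw [hX]
      refine Real.rpow_le_rpow_of_exponent_ge hx0 hx1.le ?_
      push_cast
      linarith
    have hxtpos : 0 < x ^ (-(i:ℝ) - 1 + 2*(k:ℝ)) := Real.rpow_pos_of_pos hx0 _
    have habs : ‖xp x (-(i:ℝ) - 1 + 2*(k:ℝ)) * z‖
        = x ^ (-(i:ℝ) - 1 + 2*(k:ℝ)) * ‖z‖ := by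
      rw [norm_mul, xp, Complex.norm_real, Real.norm_eq_abs, abs_of_pos hxtpos]
    have h := lt_of_lt_of_le hz (min_le_right _ _)
    rw [lt_div_iff₀ (by positivity)] at h
    rw [habs]
    calc M₂ * (x ^ (-(i:ℝ) - 1 + 2*(k:ℝ)) * ‖z‖)
        ≤ M₂ * (X * ‖z‖) := by
          gcongr
      _ < 1 := by nlinarith [norm_nonneg z]
  have hsum1 : Summable (fTerm x r a i j z) := fTerm_summable hM₁ hb₁ z hz1
  have hsumk : ∀ k ∈ Finset.Icc (1:ℤ) i,
      Summable (fTerm x r a 1 j (xp x (-(i:ℝ) - 1 + 2*(k:ℝ)) * z)) :=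
    fun k hk => fTerm_summable hM₂ hb₂ _ (hzk k hk)
  refine ⟨hsum1, hsumk, ?_⟩
  rw [fFun, tsum_congr (fTerm_fusion hx0 hi hij z), Summable.tsum_finsetSum hsumk, Complex.exp_sum]
  rfl
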